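/- arXiv:2501.12506 — 2 statements merged into one kernel-verified Lean document; each statement's English description precedes it below -/
import Mathlib

section
/- Let d ≥ 5, n ≥ 4d − 6, and g ≥ 1 be integers, and let p, γ, E be real numbers satisfying p > 36·(4d-7)·d·(d-2)/(d-1), (d-2)/(2d-2) ≤ γ ≤ ((d-2)/(2d-2))·(1 + d/p), and E ≥ 27·(4d-7)·g. Then (d+1)·E + 2 − 2g + (n-1)·(E + 2 + (E + 2·(2g-1)/(d-2))·γ)/2 − (E − g + 1)·(n+1) < 0. -/
set_option maxHeartbeats 1000000 in
/-- Let `d ≥ 5`, `n ≥ 4d − 6`, and `g ≥ 1` be integers, and let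
`p, γ, E` be real numbers satisfying `p > 36·(4d-7)·d·(d-2)/(d-1)`,
`(d-2)/(2d-2) ≤ γ ≤ ((d-2)/(2d-2))·(1 + d/p)`, and `E ≥ 27·(4d-7)·g`. Then
`(d+1)·E + 2 − 2g + (n-1)·(E + 2 + (E + 2·(2g-1)/(d-2))·γ)/2 − (E − g + 1)·(n+1) < 0`. -/
theorem stmt5 (d n g : ℤ) (hd : 5 ≤ d) (hn : 4 * d - 6 ≤ n) (hg : 1 ≤ g)
    (p γ E : ℝ)
    (hp : p > 36 * (4 * (d : ℝ) - 7) * d * (d - 2) / (d - 1))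
    (hγl : ((d : ℝ) - 2) / (2 * d - 2) ≤ γ)
    (hγu : γ ≤ (((d : ℝ) - 2) / (2 * d - 2)) * (1 + d / p))
    (hE : E ≥ 27 * (4 * (d : ℝ) - 7) * g) :
    ((d : ℝ) + 1) * E + 2 - 2 * g
        + ((n : ℝ) - 1) * (E + 2 + (E + 2 * (2 * (g : ℝ) - 1) / (d - 2)) * γ) / 2
        - (E - g + 1) * (n + 1) < 0 := by
  have hD : (5:ℝ) ≤ (d:ℝ) := by exact_mod_cast hd
  have hN : 4 * (d:ℝ) - 6 ≤ (n:ℝ) := by exact_mod_cast hn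
  have hG : (1:ℝ) ≤ (g:ℝ) := by exact_mod_cast hg
  have hd1 : (0:ℝ) < (d:ℝ) - 1 := by linarith
  have hd2 : (0:ℝ) < (d:ℝ) - 2 := by linarith
  have h2d : (0:ℝ) < 2 * (d:ℝ) - 2 := by linarith
  have h47 : (0:ℝ) < 4 * (d:ℝ) - 7 := by linarith
  have hp' : 36 * (4 * (d:ℝ) - 7) * d * (d - 2) < p * (d - 1) := by
    rw [gt_iff_lt, div_lt_iff₀ hd1] at hp
    linarith
  have hp0 : (0:ℝ) < p := by
    nlinarith [hp', mul_pos (mul_pos h47 (show (0:ℝ) < (d:ℝ) by linarith)) hd2]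
  -- γ < (d-2)/(2d-2) + 1/(72(4d-7))
  have heq : ((d:ℝ) - 2) / (2 * d - 2) * (1 + d / p)
      = (d - 2) / (2 * d - 2) + (d - 2) * d / ((2 * d - 2) * p) := by
    field_simp
  have h2 : ((d:ℝ) - 2) * d / ((2 * d - 2) * p) < 1 / (72 * (4 * d - 7)) := by
    rw [div_lt_div_iff₀ (mul_pos h2d hp0) (by linarith)]
    linarith [hp']
  have hγε : γ < ((d:ℝ) - 2) / (2 * d - 2) + 1 / (72 * (4 * d - 7)) := by
    linarith [hγu, heq.le, heq.ge, h2]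
  -- crude bound γ ≤ 3/5
  have hc2 : ((d:ℝ) - 2) / (2 * d - 2) ≤ 1 / 2 := by
    rw [div_le_iff₀ h2d]; linarith
  have hεb : 1 / (72 * (4 * (d:ℝ) - 7)) ≤ 1 / 10 := by
    rw [div_le_div_iff₀ (by linarith) (by norm_num)]; linarith
  have hγ35 : γ ≤ 3 / 5 := by linarith
  have hγ0 : 0 ≤ γ := le_trans (div_nonneg (by linarith) (by linarith)) hγl
  -- key coefficient bound
  have hc3 : (4 * (d:ℝ) - 7) * ((d - 2) / (2 * d - 2)) ≤ 2 * d - 5 - 1 / 8 := by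
    rw [show (4 * (d:ℝ) - 7) * ((d - 2) / (2 * d - 2))
        = ((4 * (d:ℝ) - 7) * (d - 2)) / (2 * d - 2) by ring, div_le_iff₀ h2d]
    nlinarith
  have he72 : (4 * (d:ℝ) - 7) * (1 / (72 * (4 * d - 7))) = 1 / 72 := by
    have : (4 * (d:ℝ) - 7) ≠ 0 := by linarith
    field_simp
  have hmul : (4 * (d:ℝ) - 7) * γ
      < (4 * d - 7) * ((d - 2) / (2 * d - 2) + 1 / (72 * (4 * d - 7))) :=
    mul_lt_mul_of_pos_left hγε h47
  have hγc : (4 * (d:ℝ) - 7) * γ < 2 * d - 5 - 1 / 8 + 1 / 72 := by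
    rw [mul_add, he72] at hmul
    linarith [hmul, hc3]
  have hA : 6 - 3 * (d:ℝ) + (4 * d - 7) * (1 + γ) / 2 < -(1 / 18) := by
    nlinarith [hγc]
  -- second term bound: (2g-1)γ/(d-2) ≤ g/2
  have hγ5 : γ / ((d:ℝ) - 2) ≤ 1 / 5 := by
    rw [div_le_iff₀ hd2]; nlinarith
  have h5 : (2 * (g:ℝ) - 1) * (γ / (d - 2)) ≤ (2 * g - 1) * (1 / 5) :=
    mul_le_mul_of_nonneg_left hγ5 (by linarith)
  have hterm2 : (2 * (g:ℝ) - 1) * γ / (d - 2) ≤ g / 2 := by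
    have hx : (2 * (g:ℝ) - 1) * γ / (d - 2) = (2 * g - 1) * (γ / (d - 2)) := by ring
    rw [hx]; linarith
  -- positivity of E
  have h13g : (13:ℝ) * (g:ℝ) ≤ (4 * (d:ℝ) - 7) * g :=
    mul_le_mul_of_nonneg_right (by linarith) (by linarith)
  have hEpos : (0:ℝ) < E := by nlinarith [hE, h13g]
  -- decomposition
  have hsplit : ((d : ℝ) + 1) * E + 2 - 2 * g
        + ((n : ℝ) - 1) * (E + 2 + (E + 2 * (2 * (g : ℝ) - 1) / (d - 2)) * γ) / 2
        - (E - g + 1) * (n + 1)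
      = E * ((d:ℝ) - n + (n - 1) * (1 + γ) / 2)
        + (n - 1) * (g + (2 * g - 1) * γ / (d - 2)) := by
    ring
  have hEA : E * (6 - 3 * (d:ℝ) + (4 * d - 7) * (1 + γ) / 2) < E * (-(1 / 18)) :=
    mul_lt_mul_of_pos_left hA hEpos
  -- (n - (4d-6)) * (E*(1-γ)/2 - (3/2) g) ≥ 0
  have hfac : (0:ℝ) ≤ E * (1 - γ) / 2 - 3 / 2 * g := by
    have h1 : E * (2 / 5) ≤ E * (1 - γ) :=
      mul_le_mul_of_nonneg_left (by linarith) hEpos.le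
    nlinarith [hE, h13g]
  have hB : (0:ℝ) ≤ ((n:ℝ) - (4 * d - 6)) * (E * (1 - γ) / 2 - 3 / 2 * g) :=
    mul_nonneg (by linarith) hfac
  have hT : ((n:ℝ) - 1) * (g + (2 * g - 1) * γ / (d - 2))
      ≤ ((n:ℝ) - 1) * (3 / 2 * g) :=
    mul_le_mul_of_nonneg_left (by linarith [hterm2]) (by linarith)
  rw [hsplit]
  linarith [hEA, hB, hT, hE]
end

section
/- Let d ≥ 5 be an integer and set A = 27·(4d − 7). Let m be an integer with m > A, let p be an odd prime satisfying (1/A − 1/m)·p² > p + (p-1)/2, and let g ≥ 0, e ≥ 1, b ≥ 1 be integers satisfying e·p^{b+1} ≥ A·(p·g + ((p-1)/2)·(2g − 1)) + A·(p-1)/2. Then there exists a positive integer m_x such that: m_x ≥ 2g, p does not divide m_x, A·(p·g + ((p-1)/2)·(m_x − 1)) ≤ e·p^{b+1}, and e·p^{b+1} < m·(p·g + ((p-1)/2)·(m_x − 1) − 1). -/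
set_option maxHeartbeats 1000000

/-- Real-arithmetic core estimate for Statement 8. -/
lemma stmt8_real_key (a M n pr qr f : ℝ) (ha : 0 < a) (haM : a < M)
    (hn : pr ^ 2 ≤ n) (hkey : (1 / a - 1 / M) * pr ^ 2 > pr + qr)
    (hpq : pr = 2 * qr + 1) (hq : 0 ≤ qr)
    (hf : n < a * f + 2 * a * qr) : n < M * (f - 1) := by
  have hM : 0 < M := ha.trans haM
  have hAM : 0 < a * M := mul_pos ha hM
  have h1 : a * M * (pr + qr) < (M - a) * pr ^ 2 := by
    have h := (mul_lt_mul_iff_right₀ hAM).mpr hkey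
    calc a * M * (pr + qr) < a * M * ((1 / a - 1 / M) * pr ^ 2) := h
      _ = (M - a) * pr ^ 2 := by field_simp
  have h2 : (M - a) * pr ^ 2 ≤ (M - a) * n :=
    mul_le_mul_of_nonneg_left hn (by linarith)
  have h3 : M * n < M * (a * f + 2 * a * qr) := (mul_lt_mul_iff_right₀ hM).mpr hf
  have h4 : 0 ≤ a * M * qr := mul_nonneg hAM.le hq
  have hfin : a * n < a * (M * (f - 1)) := by nlinarith [h1, h2, h3, h4]
  exact lt_of_mul_lt_mul_left hfin ha.le

/-- Let `d ≥ 5` be an integer and set `A = 27·(4d − 7)`. Let `m` be an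
integer with `m > A`, let `p` be an odd prime satisfying
`(1/A − 1/m)·p² > p + (p-1)/2`, and let `g ≥ 0`, `e ≥ 1`, `b ≥ 1` be integers
satisfying `e·p^{b+1} ≥ A·(p·g + ((p-1)/2)·(2g − 1)) + A·(p-1)/2`. Then there exists
a positive integer `m_x` such that: `m_x ≥ 2g`, `p ∤ m_x`,
`A·(p·g + ((p-1)/2)·(m_x − 1)) ≤ e·p^{b+1}`, and
`e·p^{b+1} < m·(p·g + ((p-1)/2)·(m_x − 1) − 1)`. -/
theorem stmt8 (d A m : ℤ) (hd : 5 ≤ d) (hA : A = 27 * (4 * d - 7)) (hm : A < m)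
    (p : ℕ) (hp : p.Prime) (hodd : Odd p)
    (hkey : (1 / (A : ℝ) - 1 / (m : ℝ)) * (p : ℝ) ^ 2 > (p : ℝ) + ((p : ℝ) - 1) / 2)
    (g e : ℤ) (b : ℕ) (hg : 0 ≤ g) (he : 1 ≤ e) (hb : 1 ≤ b)
    (hX : e * (p : ℤ) ^ (b + 1) ≥
      A * ((p : ℤ) * g + (((p : ℤ) - 1) / 2) * (2 * g - 1)) + A * ((p : ℤ) - 1) / 2) :
    ∃ m_x : ℤ, 0 < m_x ∧ 2 * g ≤ m_x ∧ ¬ ((p : ℤ) ∣ m_x) ∧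
      A * ((p : ℤ) * g + (((p : ℤ) - 1) / 2) * (m_x - 1)) ≤ e * (p : ℤ) ^ (b + 1) ∧
      e * (p : ℤ) ^ (b + 1) < m * ((p : ℤ) * g + (((p : ℤ) - 1) / 2) * (m_x - 1) - 1) := by
  -- basic facts about p and q := (p-1)/2
  have hp3 : 3 ≤ p := by
    rcases hodd with ⟨k, hk⟩
    have := hp.two_le
    omega
  set q : ℤ := ((p : ℤ) - 1) / 2 with hqdef
  have hpq : (p : ℤ) = 2 * q + 1 := by
    rcases hodd with ⟨k, hk⟩
    subst hk
    push_cast [hqdef]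
    omega
  have hq1 : 1 ≤ q := by omega
  have hA0 : 0 < A := by omega
  set N : ℤ := e * (p : ℤ) ^ (b + 1) with hNdef
  -- N ≥ p^2
  have hppos : (0 : ℤ) < (p : ℤ) := by exact_mod_cast hp.pos
  have hpow : (p : ℤ) ^ 2 ≤ (p : ℤ) ^ (b + 1) :=
    pow_le_pow_right₀ (by omega) (by omega)
  have hppow : 0 < (p : ℤ) ^ (b + 1) := pow_pos hppos _
  have hN : (p : ℤ) ^ 2 ≤ N := by
    calc (p : ℤ) ^ 2 ≤ (p : ℤ) ^ (b + 1) := hpow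
      _ = 1 * (p : ℤ) ^ (b + 1) := by ring
      _ ≤ e * (p : ℤ) ^ (b + 1) := by
          exact mul_le_mul_of_nonneg_right he hppow.le
  -- rewrite the last term of hX
  have hXq : A * ((p : ℤ) - 1) / 2 = A * q := by
    rw [show (p : ℤ) - 1 = 2 * q by omega, show A * (2 * q) = 2 * (A * q) by ring]
    exact Int.mul_ediv_cancel_left _ two_ne_zero
  have hX' : A * ((p : ℤ) * g + q * (2 * g - 1)) + A * q ≤ N := by
    rw [← hXq]; exact hX
  -- define T
  have hAq : 0 < A * q := by positivity
  set T : ℤ := (N - A * ((p : ℤ) * g - q)) / (A * q) with hTdef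
  have hT1 : A * ((p : ℤ) * g + q * (T - 1)) ≤ N := by
    have h := Int.ediv_mul_le (N - A * ((p : ℤ) * g - q)) hAq.ne'
    rw [← hTdef] at h
    nlinarith [h]
  have hT2 : N < A * ((p : ℤ) * g + q * (T - 1)) + A * q := by
    have h := Int.lt_ediv_add_one_mul_self (N - A * ((p : ℤ) * g - q)) hAq
    rw [← hTdef] at h
    nlinarith [h]
  have hT3 : 2 * g + 1 ≤ T := by
    rw [hTdef, Int.le_ediv_iff_mul_le hAq]
    nlinarith [hX']
  clear hXq hX' hX hTdef hqdef
  clear_value T N q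
  -- choose m_x
  by_cases hdvd : (p : ℤ) ∣ T
  · -- use T - 1
    refine ⟨T - 1, ?_, by omega, ?_, ?_, ?_⟩
    · -- positivity: T ≠ 1 since p ∣ T and p ≥ 3
      have hne : T ≠ 1 := by
        intro h1
        have := Int.le_of_dvd one_pos (h1 ▸ hdvd)
        omega
      omega
    · intro hdvd'
      have : (p : ℤ) ∣ 1 := by
        have := dvd_sub hdvd hdvd'
        simpa using this
      have := Int.le_of_dvd one_pos this
      omega
    · -- left inequality
      have hmono : q * (T - 1 - 1) ≤ q * (T - 1) :=
        mul_le_mul_of_nonneg_left (by omega) (by omega)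
      calc A * ((p : ℤ) * g + q * (T - 1 - 1))
          ≤ A * ((p : ℤ) * g + q * (T - 1)) :=
            mul_le_mul_of_nonneg_left (by linarith) hA0.le
        _ ≤ N := hT1
    · -- right inequality via the real lemma
      have hub : N < A * ((p : ℤ) * g + q * (T - 1 - 1)) + 2 * A * q := by
        nlinarith [hT2]
      have := stmt8_real_key (A : ℝ) (m : ℝ) (N : ℝ) (p : ℝ) (q : ℝ)
        ((p : ℤ) * g + q * (T - 1 - 1) : ℤ)
        (by exact_mod_cast hA0) (by exact_mod_cast hm)
        (by exact_mod_cast hN)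
        (by
          have hc : ((p : ℝ) - 1) / 2 = (q : ℝ) := by
            have : (p : ℝ) = 2 * (q : ℝ) + 1 := by exact_mod_cast hpq
            rw [this]; ring
          rw [hc] at hkey; exact hkey)
        (by exact_mod_cast hpq) (by exact_mod_cast (show (0:ℤ) ≤ q by omega))
        (by exact_mod_cast hub)
      exact_mod_cast this
  · -- use T
    refine ⟨T, by omega, by omega, hdvd, hT1, ?_⟩
    have hub : N < A * ((p : ℤ) * g + q * (T - 1)) + 2 * A * q := by
      nlinarith [hT2]
    have := stmt8_real_key (A : ℝ) (m : ℝ) (N : ℝ) (p : ℝ) (q : ℝ)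
      ((p : ℤ) * g + q * (T - 1) : ℤ)
      (by exact_mod_cast hA0) (by exact_mod_cast hm)
      (by exact_mod_cast hN)
      (by
        have hc : ((p : ℝ) - 1) / 2 = (q : ℝ) := by
          have : (p : ℝ) = 2 * (q : ℝ) + 1 := by exact_mod_cast hpq
          rw [this]; ring
        rw [hc] at hkey; exact hkey)
      (by exact_mod_cast hpq) (by exact_mod_cast (show (0:ℤ) ≤ q by omega))
      (by exact_mod_cast hub)
    exact_mod_cast this
end
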